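/- Let a_1,...,a_n be unit vectors in R^3, p_1,...,p_n ≥ 0 with Σ_i p_i = 2 and Σ_i p_i a_i = 0, and suppose f(v_s) ≤ 1 for all s ∈ {±1}^3 with Σ_j α_j > 0. Define q_i(s) = p_i Θ(a_i · v_s) + (1 - f(v_s)) α_i / (Σ_j α_j). Then for each i, Σ_{s∈{±1}^3} q_i(s) G_s = (p_i/2)(I + (1/2) a_i·σ), where G_s = (1/16)(2I + v_s·σ). -/

import Mathlib

open RealInnerProductSpace Matrix

noncomputable def σx : Matrix (Fin 2) (Fin 2) ℂ := !![0, 1; 1, 0]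
noncomputable def σy : Matrix (Fin 2) (Fin 2) ℂ := !![0, -Complex.I; Complex.I, 0]
noncomputable def σz : Matrix (Fin 2) (Fin 2) ℂ := !![1, 0; 0, -1]

/-- The vertex `(s_x, s_y, s_z)` of the cube `[-1,1]^3`, signs encoded by booleans. -/
noncomputable def cubeVtx (s : Fin 3 → Bool) : EuclideanSpace ℝ (Fin 3) :=
  WithLp.toLp 2 (fun k => if s k then (1 : ℝ) else -1)

/-- `b·σ` for `b ∈ ℝ³`. -/
noncomputable def dotSigma (b : EuclideanSpace ℝ (Fin 3)) : Matrix (Fin 2) (Fin 2) ℂ :=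
  b 0 • σx + b 1 • σy + b 2 • σz

/-- The coarse-grained octant operator `G_{s_x s_y s_z} = (1/16)(2𝟙 + v_s·σ)`. -/
noncomputable def Goct (s : Fin 3 → Bool) : Matrix (Fin 2) (Fin 2) ℂ :=
  ((1 : ℝ) / 16) • ((2 : ℝ) • (1 : Matrix (Fin 2) (Fin 2) ℂ) + dotSigma (cubeVtx s))

/- ### Auxiliary scalar lemmas -/

set_option maxHeartbeats 1000000

lemma inner_cubeVtx (b : EuclideanSpace ℝ (Fin 3)) (s : Fin 3 → Bool) :
    ⟪b, cubeVtx s⟫ = b 0 * cubeVtx s 0 + b 1 * cubeVtx s 1 + b 2 * cubeVtx s 2 := by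
  simp [PiLp.inner_apply, RCLike.inner_apply, Fin.sum_univ_three]
  ring

lemma sum_bool3 {M : Type*} [AddCommMonoid M] (F : (Fin 3 → Bool) → M) :
    ∑ s, F s = F ![false,false,false] + F ![false,false,true] + F ![false,true,false]
      + F ![false,true,true] + F ![true,false,false] + F ![true,false,true]
      + F ![true,true,false] + F ![true,true,true] := by
  rw [show (Finset.univ : Finset (Fin 3 → Bool)) =
    {![false,false,false], ![false,false,true], ![false,true,false], ![false,true,true],
     ![true,false,false], ![true,false,true], ![true,true,false], ![true,true,true]} from by decide]
  rw [Finset.sum_insert (by decide), Finset.sum_insert (by decide), Finset.sum_insert (by decide),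
    Finset.sum_insert (by decide), Finset.sum_insert (by decide), Finset.sum_insert (by decide),
    Finset.sum_insert (by decide), Finset.sum_singleton]
  abel

lemma fin3_0 (h : (0:ℕ) < 3) : (⟨0, h⟩ : Fin 3) = 0 := rfl
lemma fin3_1 (h : (1:ℕ) < 3) : (⟨1, h⟩ : Fin 3) = 1 := rfl
lemma fin3_2 (h : (2:ℕ) < 3) : (⟨2, h⟩ : Fin 3) = 2 := rfl

lemma cubeVtx_neg (s : Fin 3 → Bool) (k : Fin 3) :
    cubeVtx (fun j => !s j) k = -(cubeVtx s k) := by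
  simp only [cubeVtx, PiLp.toLp_apply]
  cases s k <;> norm_num

lemma key_max (c t : ℝ) : max c 0 * t + max (-c) 0 * (-t) = c * t := by
  rcases le_total c 0 with h | h
  · rw [max_eq_right h, max_eq_left (by linarith)]; ring
  · rw [max_eq_left h, max_eq_right (by linarith)]; ring

/-- `∑_s ⟪b, v_s⟫ * (v_s)_k = 8 b_k` -/
lemma sum_inner_v (b : EuclideanSpace ℝ (Fin 3)) (k : Fin 3) :
    ∑ s : Fin 3 → Bool, ⟪b, cubeVtx s⟫ * cubeVtx s k = 8 * b k := by
  fin_cases k <;>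
    (rw [sum_bool3]; simp only [inner_cubeVtx]; simp only [cubeVtx, PiLp.toLp_apply, Matrix.cons_val_zero, Matrix.cons_val_one,
      Matrix.head_cons, Matrix.cons_val_two, Matrix.tail_cons, fin3_0, fin3_1, fin3_2]
     norm_num
     ring)

/-- `∑_s Θ(⟪b, v_s⟫) (v_s)_k = 4 b_k` -/
lemma sum_theta_v (b : EuclideanSpace ℝ (Fin 3)) (k : Fin 3) :
    ∑ s : Fin 3 → Bool, max ⟪b, cubeVtx s⟫ 0 * cubeVtx s k = 4 * b k := by
  have h2 : (2:ℝ) * ∑ s : Fin 3 → Bool, max ⟪b, cubeVtx s⟫ 0 * cubeVtx s k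
      = ∑ s : Fin 3 → Bool, ⟪b, cubeVtx s⟫ * cubeVtx s k := by
    have hbij : ∑ s : Fin 3 → Bool, max ⟪b, cubeVtx s⟫ 0 * cubeVtx s k
        = ∑ s : Fin 3 → Bool, max ⟪b, cubeVtx (fun j => !s j)⟫ 0 * cubeVtx (fun j => !s j) k := by
      exact (Fintype.sum_bijective (fun (s : Fin 3 → Bool) (j : Fin 3) => !(s j))
        (Function.Involutive.bijective (fun s => by funext j; simp)) _ _ (fun s => rfl)).symm
    rw [two_mul]
    nth_rewrite 2 [hbij]
    rw [← Finset.sum_add_distrib]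
    refine Finset.sum_congr rfl fun s _ => ?_
    have hin : ⟪b, cubeVtx (fun j => !s j)⟫ = -⟪b, cubeVtx s⟫ := by
      rw [inner_cubeVtx, inner_cubeVtx, cubeVtx_neg, cubeVtx_neg, cubeVtx_neg]; ring
    rw [hin, cubeVtx_neg, key_max]
  linarith [sum_inner_v b k]

/-- `∑_s (v_s)_k = 0` -/
lemma sum_v (k : Fin 3) : ∑ s : Fin 3 → Bool, cubeVtx s k = 0 := by
  fin_cases k <;> (rw [sum_bool3]; norm_num [cubeVtx])

theorem parent_povm_simulates
    (n : ℕ) (a : Fin n → EuclideanSpace ℝ (Fin 3)) (p : Fin n → ℝ)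
    (ha : ∀ i, ‖a i‖ = 1) (hp : ∀ i, 0 ≤ p i)
    (hp2 : ∑ i, p i = 2) (hsum : ∑ i, p i • a i = 0)
    (f : EuclideanSpace ℝ (Fin 3) → ℝ)
    (hf : ∀ x, f x = ∑ i, p i * max ⟪x, a i⟫ 0)
    (α : Fin n → ℝ)
    (hα : ∀ i, α i = (p i / 2) * (1 - (1 / 4) * ∑ s : Fin 3 → Bool, max ⟪a i, cubeVtx s⟫ 0))
    (hframe : ∀ s : Fin 3 → Bool, f (cubeVtx s) ≤ 1)
    (hαpos : 0 < ∑ j, α j) :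
    ∀ i, ∑ s : Fin 3 → Bool,
        (p i * max ⟪a i, cubeVtx s⟫ 0 + (1 - f (cubeVtx s)) * α i / (∑ j, α j)) • Goct s
      = (p i / 2) • ((1 : Matrix (Fin 2) (Fin 2) ℂ) + ((1 : ℝ) / 2) • dotSigma (a i)) := by
  intro i
  set A := ∑ j, α j with hA
  have hAne : A ≠ 0 := ne_of_gt hαpos
  set q : (Fin 3 → Bool) → ℝ :=
    fun s => p i * max ⟪a i, cubeVtx s⟫ 0 + (1 - f (cubeVtx s)) * α i / A with hq
  -- p_j * T_j = 4 p_j - 8 α_j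
  have hpT : ∀ j, p j * ∑ s : Fin 3 → Bool, max ⟪a j, cubeVtx s⟫ 0 = 4 * p j - 8 * α j := by
    intro j
    have := hα j
    nlinarith [this]
  -- ∑_s f(v_s) = 8 - 8 A
  have hfsum : ∑ s : Fin 3 → Bool, f (cubeVtx s) = 8 - 8 * A := by
    have h1 : ∑ s : Fin 3 → Bool, f (cubeVtx s)
        = ∑ j, p j * ∑ s : Fin 3 → Bool, max ⟪a j, cubeVtx s⟫ 0 := by
      simp_rw [hf, Finset.mul_sum]
      rw [Finset.sum_comm]
      refine Finset.sum_congr rfl fun j _ => Finset.sum_congr rfl fun s _ => ?_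
      rw [real_inner_comm]
    rw [h1]
    have h2 : ∑ j, (4 * p j - 8 * α j) = 8 - 8 * A := by
      rw [Finset.sum_sub_distrib, ← Finset.mul_sum, ← Finset.mul_sum, hp2, ← hA]; ring
    rw [← h2]
    exact Finset.sum_congr rfl fun j _ => hpT j
  have hone : ∑ s : Fin 3 → Bool, (1 - f (cubeVtx s)) = 8 * A := by
    rw [Finset.sum_sub_distrib, hfsum]; simp
  -- S0 : ∑ q = 4 p_i
  have S0 : ∑ s : Fin 3 → Bool, q s = 4 * p i := by
    rw [hq]
    rw [Finset.sum_add_distrib, ← Finset.mul_sum]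
    have : ∑ s : Fin 3 → Bool, (1 - f (cubeVtx s)) * α i / A
        = (∑ s : Fin 3 → Bool, (1 - f (cubeVtx s))) * α i / A := by
      rw [← Finset.sum_div, ← Finset.sum_mul]
    rw [this, hone]
    have h8 : 8 * A * α i / A = 8 * α i := by field_simp
    rw [h8]
    linarith [hpT i]
  -- ∑_s (1 - f(v_s)) * v_s k = 0
  have hfv : ∀ k : Fin 3, ∑ s : Fin 3 → Bool, (1 - f (cubeVtx s)) * cubeVtx s k = 0 := by
    intro k
    have hproj : ∑ j, p j * a j k = 0 := by
      have h0 : (EuclideanSpace.proj k : EuclideanSpace ℝ (Fin 3) →L[ℝ] ℝ) (∑ j, p j • a j)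
          = 0 := by rw [hsum]; simp
      rw [map_sum] at h0
      simpa using h0
    have h1 : ∑ s : Fin 3 → Bool, f (cubeVtx s) * cubeVtx s k
        = ∑ j, p j * (4 * a j k) := by
      have : ∑ s : Fin 3 → Bool, f (cubeVtx s) * cubeVtx s k
          = ∑ j, p j * ∑ s : Fin 3 → Bool, max ⟪a j, cubeVtx s⟫ 0 * cubeVtx s k := by
        simp_rw [hf, Finset.sum_mul, Finset.mul_sum]
        rw [Finset.sum_comm]
        refine Finset.sum_congr rfl fun j _ => Finset.sum_congr rfl fun s _ => ?_
        rw [real_inner_comm]; ring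
      rw [this]
      exact Finset.sum_congr rfl fun j _ => by rw [sum_theta_v]
    have h2 : ∑ j, p j * (4 * a j k) = 0 := by
      have : ∑ j, p j * (4 * a j k) = 4 * ∑ j, p j * a j k := by
        rw [Finset.mul_sum]; exact Finset.sum_congr rfl fun j _ => by ring
      rw [this, hproj]; ring
    have h3 : ∑ s : Fin 3 → Bool, (1 - f (cubeVtx s)) * cubeVtx s k
        = (∑ s : Fin 3 → Bool, cubeVtx s k) - ∑ s : Fin 3 → Bool, f (cubeVtx s) * cubeVtx s k := by
      rw [← Finset.sum_sub_distrib]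
      exact Finset.sum_congr rfl fun s _ => by ring
    rw [h3, sum_v, h1, h2]; ring
  -- Sk : ∑ q(s) v_s k = 4 p_i (a_i)_k
  have Sk : ∀ k : Fin 3, ∑ s : Fin 3 → Bool, q s * cubeVtx s k = 4 * p i * a i k := by
    intro k
    have : ∑ s : Fin 3 → Bool, q s * cubeVtx s k
        = p i * (∑ s : Fin 3 → Bool, max ⟪a i, cubeVtx s⟫ 0 * cubeVtx s k)
          + (∑ s : Fin 3 → Bool, (1 - f (cubeVtx s)) * cubeVtx s k) * (α i / A) := by
      rw [Finset.mul_sum, Finset.sum_mul, ← Finset.sum_add_distrib]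
      exact Finset.sum_congr rfl fun s _ => by rw [hq]; ring
    rw [this, sum_theta_v, hfv]; ring
  -- matrix part
  have hG : ∀ s : Fin 3 → Bool, q s • Goct s
      = (q s * (1/8)) • (1 : Matrix (Fin 2) (Fin 2) ℂ)
        + (q s * cubeVtx s 0 * (1/16)) • σx
        + (q s * cubeVtx s 1 * (1/16)) • σy
        + (q s * cubeVtx s 2 * (1/16)) • σz := by
    intro s
    simp only [Goct, dotSigma]
    module
  calc ∑ s : Fin 3 → Bool,
        (p i * max ⟪a i, cubeVtx s⟫ 0 + (1 - f (cubeVtx s)) * α i / (∑ j, α j)) • Goct s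
      = ∑ s : Fin 3 → Bool, ((q s * (1/8)) • (1 : Matrix (Fin 2) (Fin 2) ℂ)
        + (q s * cubeVtx s 0 * (1/16)) • σx
        + (q s * cubeVtx s 1 * (1/16)) • σy
        + (q s * cubeVtx s 2 * (1/16)) • σz) :=
        Finset.sum_congr rfl fun s _ => by rw [← hG s, hq]
    _ = ((∑ s : Fin 3 → Bool, q s) * (1/8)) • (1 : Matrix (Fin 2) (Fin 2) ℂ)
        + ((∑ s : Fin 3 → Bool, q s * cubeVtx s 0) * (1/16)) • σx
        + ((∑ s : Fin 3 → Bool, q s * cubeVtx s 1) * (1/16)) • σy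
        + ((∑ s : Fin 3 → Bool, q s * cubeVtx s 2) * (1/16)) • σz := by
        rw [Finset.sum_add_distrib, Finset.sum_add_distrib, Finset.sum_add_distrib,
          ← Finset.sum_smul, ← Finset.sum_smul, ← Finset.sum_smul, ← Finset.sum_smul,
          Finset.sum_mul, Finset.sum_mul, Finset.sum_mul, Finset.sum_mul]
    _ = (p i / 2) • ((1 : Matrix (Fin 2) (Fin 2) ℂ) + ((1 : ℝ) / 2) • dotSigma (a i)) := by
        rw [S0, Sk 0, Sk 1, Sk 2]
        simp only [dotSigma]
        module
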